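/- Let k be a field of characteristic p > 0 and D = d/dt the standard derivation on k[t]. Then t^{p−1} is not in the image of D, while 1 is in the image of D; hence the image of D is not a Mathieu–Zhao space of k[t]. -/
import Mathlib

theorem stmt7 (k : Type*) [Field k] (p : ℕ) [Fact p.Prime] [CharP k p] :
    (Polynomial.X ^ (p - 1) ∉ Set.range (⇑(Polynomial.derivative (R := k)))) ∧
    ((1 : Polynomial k) ∈ Set.range (⇑(Polynomial.derivative (R := k)))) ∧
    ¬ (∀ a : Polynomial k,
        (∃ N : ℕ, ∀ m ≥ N, a ^ m ∈ Set.range (⇑(Polynomial.derivative (R := k)))) →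
        ∀ b : Polynomial k, ∃ N : ℕ, ∀ m ≥ N,
          b * a ^ m ∈ Set.range (⇑(Polynomial.derivative (R := k)))) := by
  have hp : p.Prime := Fact.out
  have hnot : Polynomial.X ^ (p - 1) ∉ Set.range (⇑(Polynomial.derivative (R := k))) := by
    rintro ⟨f, hf⟩
    have h1 : (Polynomial.derivative f).coeff (p - 1) = 1 := by
      rw [hf, Polynomial.coeff_X_pow]
      simp
    rw [Polynomial.coeff_derivative] at h1
    have hpp : p - 1 + 1 = p := Nat.succ_pred_eq_of_pos hp.pos
    have hcast : ((p - 1 : ℕ) : k) + 1 = (p : k) := by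
      rw [← Nat.cast_succ]; exact_mod_cast congrArg (Nat.cast : ℕ → k) hpp
    rw [hcast, CharP.cast_eq_zero k p, mul_zero] at h1
    exact one_ne_zero h1.symm
  refine ⟨hnot, ⟨Polynomial.X, Polynomial.derivative_X⟩, ?_⟩
  intro h
  obtain ⟨N, hN⟩ := h 1 ⟨0, fun m _ => by
    simp only [one_pow]
    exact ⟨Polynomial.X, Polynomial.derivative_X⟩⟩ (Polynomial.X ^ (p - 1))
  have := hN N le_rfl
  rw [one_pow, mul_one] at this
  exact hnot this
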